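/- Let q be a prime power, n ≥ 1, t ≥ 0, let f(X) = ∑_i a_i X^{q^i} ∈ F_{q^n}[X] be a q-polynomial, and let C(X,Y) ∈ F_{q^n}[X,Y] be the quotient polynomial (f(X)·Y^{q^t} − f(Y)·X^{q^t})/(X^q·Y − X·Y^q). Set U = {(x^{q^t}, f(x)) : x ∈ F_{q^n}} ⊆ F_{q^n}². Then every one-dimensional F_{q^n}-subspace of F_{q^n}² meets U in an F_q-subspace of dimension at most 1 (i.e., U defines a maximum scattered linear set in PG(1,q^n)) if and only if there is no point (x,y) ∈ F_{q^n}² with x ≠ 0, y/x ∉ F_q and C(x,y) = 0. -/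

import Mathlib

section aux

variable {F : Type} [Field F] [Fintype F]

lemma frob_inj_aux (q n : ℕ) (_hq : 2 ≤ q) (_hn : 1 ≤ n)
    (hcard : Fintype.card F = q ^ n) :
    ∀ z w : F, z ^ q = w ^ q → z = w := by
  intro z w h
  have hz : z ^ q ^ n = z := by rw [← hcard]; exact FiniteField.pow_card z
  have hw : w ^ q ^ n = w := by rw [← hcard]; exact FiniteField.pow_card w
  have hqn : q ^ n = q * q ^ (n - 1) := by
    rw [← pow_succ']; congr 1; omega
  calc z = z ^ q ^ n := hz.symm
    _ = (z ^ q) ^ q ^ (n - 1) := by rw [hqn, pow_mul]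
    _ = (w ^ q) ^ q ^ (n - 1) := by rw [h]
    _ = w ^ q ^ n := by rw [hqn, pow_mul]
    _ = w := hw

lemma frobt_inj_aux (q n : ℕ) (_hq : 2 ≤ q) (_hn : 1 ≤ n)
    (hcard : Fintype.card F = q ^ n) (s : ℕ) :
    ∀ z w : F, z ^ q ^ s = w ^ q ^ s → z = w := by
  induction s with
  | zero => intro z w h; simpa using h
  | succ s ih =>
    intro z w h
    apply ih
    apply frob_inj_aux q n _hq _hn hcard
    rw [← pow_mul, ← pow_mul, ← pow_succ]
    exact h

end aux

/-- Let `q = p^e` be a prime power, `F = F_{q^n}`, `f(X) = ∑ a_i X^{q^i}` a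
`q`-polynomial over `F`, and `C(X,Y) = (f(X)·Y^{q^t} − f(Y)·X^{q^t})/(X^q·Y − X·Y^q)`.
Then `U = {(x^{q^t}, f(x))}` meets every one-dimensional `F`-subspace of `F²` in an
`F_q`-subspace of dimension at most `1` iff there is no point `(x,y) ∈ F²` with `x ≠ 0`,
`y/x ∉ F_q` and `C(x,y) = 0`.  Here `F_q` is identified with `{c : c^q = c}`. -/
theorem stmt_3 (p e : ℕ) [Fact p.Prime] (he : 0 < e) (q : ℕ) (hq : q = p ^ e)
    (n : ℕ) (hn : 1 ≤ n) (F : Type) [Field F] [Fintype F]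
    (hcard : Fintype.card F = q ^ n)
    (t d : ℕ) (a : Fin (d + 1) → F)
    (C : MvPolynomial (Fin 2) F)
    (hC : C * ((MvPolynomial.X 0 : MvPolynomial (Fin 2) F) ^ q * MvPolynomial.X 1 -
            MvPolynomial.X 0 * (MvPolynomial.X 1) ^ q) =
          (∑ i, MvPolynomial.C (a i) * (MvPolynomial.X 0 : MvPolynomial (Fin 2) F) ^ q ^ (i : ℕ)) *
              (MvPolynomial.X 1) ^ q ^ t -
            (∑ i, MvPolynomial.C (a i) * (MvPolynomial.X 1 : MvPolynomial (Fin 2) F) ^ q ^ (i : ℕ)) *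
              (MvPolynomial.X 0) ^ q ^ t) :
    (∀ W : Submodule F (F × F), Module.finrank F W = 1 →
      ∀ u ∈ W, u ∈ Set.range (fun x : F => (x ^ q ^ t, ∑ i, a i * x ^ q ^ (i : ℕ))) → u ≠ 0 →
        ∀ w ∈ W, w ∈ Set.range (fun x : F => (x ^ q ^ t, ∑ i, a i * x ^ q ^ (i : ℕ))) →
          ∃ c : F, c ^ q = c ∧ w = c • u) ↔
    ¬ ∃ x y : F, x ≠ 0 ∧ ¬ ((y / x) ^ q = y / x) ∧ MvPolynomial.eval ![x, y] C = 0 := by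
  have hq2 : 2 ≤ q := by
    rw [hq]
    calc 2 ≤ p := (Fact.out : p.Prime).two_le
      _ = p ^ 1 := (pow_one p).symm
      _ ≤ p ^ e := Nat.pow_le_pow_right (Fact.out : p.Prime).pos he
  have hq0 : q ≠ 0 := by omega
  have hqt0 : ∀ i : ℕ, q ^ i ≠ 0 := fun i => pow_ne_zero i hq0
  set f : F → F := fun x => ∑ i, a i * x ^ q ^ (i : ℕ) with hf
  -- evaluation of the defining identity
  have heval : ∀ x y : F, MvPolynomial.eval ![x, y] C * (x ^ q * y - x * y ^ q) =
      f x * y ^ q ^ t - f y * x ^ q ^ t := by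
    intro x y
    have := congrArg (MvPolynomial.eval ![x, y]) hC
    simpa [hf, Matrix.cons_val_zero, Matrix.cons_val_one, Matrix.head_cons] using this
  have hfactor : ∀ x y : F, x ≠ 0 →
      x ^ q * y - x * y ^ q = x ^ (q + 1) * (y / x - (y / x) ^ q) := by
    intro x y hx
    rw [div_pow]
    field_simp
    ring
  have hf0 : f 0 = 0 := by
    simp [hf, zero_pow, hqt0, hq0]
  constructor
  · rintro hL ⟨x, y, hx, hyx, hC0⟩
    have hxt : x ^ q ^ t ≠ 0 := pow_ne_zero _ hx
    have hkey : f x * y ^ q ^ t = f y * x ^ q ^ t := by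
      have := heval x y
      rw [hC0, zero_mul] at this
      linear_combination -this
    set u : F × F := (x ^ q ^ t, f x) with hu
    set w : F × F := (y ^ q ^ t, f y) with hw
    have hu0 : u ≠ 0 := by
      simp only [hu, Prod.ext_iff, ne_eq, Prod.fst_zero, Prod.snd_zero, not_and]
      intro h; exact absurd h hxt
    have hwu : w = ((y / x) ^ q ^ t) • u := by
      simp only [hu, hw, Prod.smul_mk, smul_eq_mul, Prod.ext_iff]
      constructor
      · rw [div_pow, div_mul_cancel₀ _ hxt]
      · rw [div_pow]
        field_simp
        linear_combination -hkey
    obtain ⟨c, hcq, hwc⟩ := hL (Submodule.span F {u}) (finrank_span_singleton hu0)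
      u (Submodule.mem_span_singleton_self u) ⟨x, rfl⟩ hu0
      w (by rw [hwu]; exact Submodule.smul_mem _ _ (Submodule.mem_span_singleton_self u))
      ⟨y, rfl⟩
    have hc : c = (y / x) ^ q ^ t := by
      have h1 : y ^ q ^ t = c * x ^ q ^ t := congrArg Prod.fst hwc
      have h2 : (y / x) ^ q ^ t * x ^ q ^ t = y ^ q ^ t := by
        rw [div_pow, div_mul_cancel₀ _ hxt]
      apply mul_right_cancel₀ hxt
      rw [← h1, h2]
    apply hyx
    apply frobt_inj_aux q n hq2 hn hcard t
    rw [hc] at hcq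
    calc ((y / x) ^ q) ^ q ^ t = ((y / x) ^ q ^ t) ^ q := by
          rw [← pow_mul, ← pow_mul, mul_comm]
      _ = (y / x) ^ q ^ t := hcq
  · rintro hR W hW u huW huU hu0 w hwW hwU
    obtain ⟨x, hxu⟩ := huU
    obtain ⟨y, hyw⟩ := hwU
    have hx : x ≠ 0 := by
      rintro rfl
      apply hu0
      rw [← hxu]
      simp [hf0, zero_pow, hqt0, hq0]
    have hxt : x ^ q ^ t ≠ 0 := pow_ne_zero _ hx
    by_cases hy : y = 0
    · refine ⟨0, by simp [zero_pow hq0], ?_⟩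
      rw [← hyw, hy]
      simp [hf0, zero_pow, hqt0, hq0]
    -- w = λ • u since finrank W = 1
    obtain ⟨lam, hlam⟩ := (finrank_eq_one_iff_of_nonzero' (⟨u, huW⟩ : W)
      (by simpa using hu0)).mp hW ⟨w, hwW⟩
    have hlam' : lam • u = w := congrArg Subtype.val hlam
    have h1 : lam * x ^ q ^ t = y ^ q ^ t := by
      have := congrArg Prod.fst hlam'
      simpa [← hxu, ← hyw] using this
    have h2 : lam * f x = f y := by
      have := congrArg Prod.snd hlam'
      simpa [← hxu, ← hyw] using this
    have hkey : f x * y ^ q ^ t - f y * x ^ q ^ t = 0 := by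
      rw [← h1, ← h2]; ring
    have hfq : (y / x) ^ q = y / x := by
      by_contra hyx
      apply hR
      refine ⟨x, y, hx, hyx, ?_⟩
      have := heval x y
      rw [hkey, hfactor x y hx] at this
      rcases mul_eq_zero.mp this with h | h
      · exact h
      · exfalso
        rcases mul_eq_zero.mp h with h' | h'
        · exact pow_ne_zero _ hx h'
        · exact hyx (by linear_combination -h')
    refine ⟨(y / x) ^ q ^ t, ?_, ?_⟩
    · calc ((y / x) ^ q ^ t) ^ q = ((y / x) ^ q) ^ q ^ t := by
            rw [← pow_mul, ← pow_mul, mul_comm]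
        _ = (y / x) ^ q ^ t := by rw [hfq]
    · have hlameq : lam = (y / x) ^ q ^ t := by
        have : lam * x ^ q ^ t = (y / x) ^ q ^ t * x ^ q ^ t := by
          rw [h1, div_pow, div_mul_cancel₀ _ hxt]
        exact mul_right_cancel₀ hxt this
      rw [← hlameq, ← hlam']
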